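/- arXiv:1012.2206 — 4 statements merged into one kernel-verified Lean document; each statement's English description precedes it below -/
import Mathlib

section
/- For all n, m ≥ 1: Σ_{j} Σ_{k} (-1)^{j+k} · binomial(n-j, j) · binomial(m-k, k) · C_{n+m-j-k} = binomial(n+m, n), where C_i denotes the i-th Catalan number and the sums range over 0 ≤ j ≤ ⌊n/2⌋ and 0 ≤ k ≤ ⌊m/2⌋. -/
/-- Auxiliary alternating sum. -/
def auxT (c : ℕ → ℤ) (n s : ℕ) : ℤ :=
  ∑ k ∈ Finset.range (n / 2 + 1), (-1 : ℤ) ^ k * ((n - k).choose k : ℤ) * c (n - k + s)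

lemma auxT_rec (c : ℕ → ℤ) (n s : ℕ) :
    auxT c (n + 2) s = auxT c (n + 1) (s + 1) - auxT c n (s + 1) := by
  have hdiv : (n + 2) / 2 + 1 = n / 2 + 2 := by omega
  have h1 : auxT c (n + 1) (s + 1)
      = ∑ k ∈ Finset.range (n / 2 + 2),
          (-1 : ℤ) ^ k * ((n + 1 - k).choose k : ℤ) * c (n + 1 - k + (s + 1)) := by
    unfold auxT
    refine Finset.sum_subset ?_ ?_
    · intro x hx
      simp only [Finset.mem_range] at *
      omega
    · intro x hx hx'
      simp only [Finset.mem_range] at hx hx'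
      have : n + 1 - x < x := by omega
      rw [Nat.choose_eq_zero_of_lt this]
      push_cast
      ring
  rw [h1]
  unfold auxT
  rw [hdiv, Finset.sum_range_succ' (fun k => (-1 : ℤ) ^ k * ((n + 2 - k).choose k : ℤ)
      * c (n + 2 - k + s)),
    Finset.sum_range_succ' (fun k => (-1 : ℤ) ^ k * ((n + 1 - k).choose k : ℤ)
      * c (n + 1 - k + (s + 1)))]
  simp only [pow_zero, Nat.sub_zero, Nat.choose_zero_right, Nat.cast_one, one_mul]
  have harg0 : n + 1 + (s + 1) = n + 2 + s := by omega
  rw [harg0]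
  have hterm : ∀ k ∈ Finset.range (n / 2 + 1),
      (-1 : ℤ) ^ (k + 1) * ((n + 2 - (k + 1)).choose (k + 1) : ℤ) * c (n + 2 - (k + 1) + s)
      = (-1 : ℤ) ^ (k + 1) * ((n + 1 - (k + 1)).choose (k + 1) : ℤ)
          * c (n + 1 - (k + 1) + (s + 1)) -
        (-1 : ℤ) ^ k * ((n - k).choose k : ℤ) * c (n - k + (s + 1)) := by
    intro k hk
    simp only [Finset.mem_range] at hk
    have e1 : n + 2 - (k + 1) = (n - k) + 1 := by omega
    have e2 : n + 1 - (k + 1) = n - k := by omega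
    have e3 : n + 2 - (k + 1) + s = n - k + (s + 1) := by omega
    have e4 : n - k + 1 + (s + 1) = n - k + (s + 1) + 1 := by omega
    rw [e2, e3, e1, Nat.choose_succ_succ (n - k) k]
    push_cast
    ring
  rw [Finset.sum_congr rfl hterm, Finset.sum_sub_distrib]
  ring

/-- catalan as ℤ. -/
def catZ (a : ℕ) : ℤ := (catalan a : ℤ)

/-- Closed form for inner sum. -/
def RA (n s : ℕ) : ℤ := ((n + 2 * s).choose s : ℤ) - ((n + 2 * s).choose (n + s + 1) : ℤ)

lemma catalan_closed (s : ℕ) :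
    (catalan s : ℤ) = ((2 * s).choose s : ℤ) - ((2 * s).choose (s + 1) : ℤ) := by
  have h1 : (s + 1) * catalan s = (2 * s).choose s := by
    rw [← Nat.centralBinom, succ_mul_catalan_eq_centralBinom]
  have h2 : (2 * s).choose (s + 1) * (s + 1) = (2 * s).choose s * s := by
    have := Nat.choose_succ_right_eq (2 * s) s
    rwa [show 2 * s - s = s by omega] at this
  have hs : ((s : ℤ) + 1) ≠ 0 := by positivity
  apply mul_left_cancel₀ hs
  have h1' : ((s : ℤ) + 1) * (catalan s : ℤ) = ((2 * s).choose s : ℤ) := by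
    exact_mod_cast h1
  have h2' : ((2 * s).choose (s + 1) : ℤ) * ((s : ℤ) + 1) = ((2 * s).choose s : ℤ) * s := by
    exact_mod_cast h2
  rw [h1']
  linarith

lemma lemA : ∀ n, ∀ s, auxT catZ n s = RA n s := by
  intro n
  induction n using Nat.strong_induction_on with
  | _ n ih =>
    match n with
    | 0 =>
      intro s
      unfold auxT RA catZ
      simp only [Nat.zero_div, zero_add, Finset.sum_range_one, pow_zero,
        Nat.zero_sub, Nat.choose_zero_right, Nat.cast_one, one_mul, Nat.zero_add,
        Nat.sub_zero, Nat.add_zero]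
      exact catalan_closed s
    | 1 =>
      intro s
      unfold auxT RA catZ
      rw [show (1 : ℕ) / 2 + 1 = 1 from rfl]
      simp only [Finset.sum_range_one, pow_zero, Nat.cast_one, one_mul]
      rw [show (1 : ℕ) - 0 = 1 from rfl, Nat.choose_zero_right]
      rw [show 1 - 0 + s = s + 1 from by omega]
      have hc := catalan_closed (s + 1)
      have p1 : (2 * (s + 1)).choose (s + 1) = (2 * s + 1).choose s + (2 * s + 1).choose (s + 1) := by
        rw [show 2 * (s + 1) = (2 * s + 1) + 1 from by omega]
        exact Nat.choose_succ_succ (2 * s + 1) s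
      have p2 : (2 * (s + 1)).choose (s + 1 + 1) = (2 * s + 1).choose (s + 1) + (2 * s + 1).choose (s + 2) := by
        rw [show 2 * (s + 1) = (2 * s + 1) + 1 from by omega]
        exact Nat.choose_succ_succ (2 * s + 1) (s + 1)
      rw [p1, p2] at hc
      rw [show 1 + 2 * s = 2 * s + 1 from by omega, show s + 1 + 1 = s + 2 from by omega]
      push_cast at hc ⊢
      linarith
    | (n + 2) =>
      intro s
      rw [auxT_rec, ih (n + 1) (by omega), ih n (by omega)]
      unfold RA
      have p1 : ((n + 1) + 2 * (s + 1)).choose (s + 1)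
          = ((n + 2) + 2 * s).choose s + ((n + 2) + 2 * s).choose (s + 1) := by
        rw [show (n + 1) + 2 * (s + 1) = ((n + 2) + 2 * s) + 1 from by omega]
        exact Nat.choose_succ_succ ((n + 2) + 2 * s) s
      have p2 : ((n + 1) + 2 * (s + 1)).choose (n + s + 3)
          = ((n + 2) + 2 * s).choose (n + s + 2) + ((n + 2) + 2 * s).choose (n + s + 3) := by
        rw [show (n + 1) + 2 * (s + 1) = ((n + 2) + 2 * s) + 1 from by omega]
        exact Nat.choose_succ_succ ((n + 2) + 2 * s) (n + s + 2)
      rw [show (n + 1) + (s + 1) + 1 = n + s + 3 from by omega,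
        show n + 2 * (s + 1) = (n + 2) + 2 * s from by omega,
        show n + (s + 1) + 1 = n + s + 2 from by omega,
        show (n + 2) + s + 1 = n + s + 3 from by omega]
      push_cast [p1, p2]
      ring

/-- Closed form for the double sum. -/
def RB (n m s : ℕ) : ℤ :=
  ((n + m + 2 * s).choose (m + s) : ℤ) - ((n + m + 2 * s).choose (n + m + s + 1) : ℤ)

lemma lemB (n : ℕ) : ∀ m, ∀ s, auxT (RA n) m s = RB n m s := by
  intro m
  induction m using Nat.strong_induction_on with
  | _ m ih =>
    match m with
    | 0 =>
      intro s
      unfold auxT RB RA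
      simp only [Nat.zero_div, zero_add, Finset.sum_range_one, pow_zero,
        Nat.choose_zero_right, Nat.cast_one, one_mul, Nat.sub_zero, Nat.add_zero,
        Nat.zero_add]
    | 1 =>
      intro s
      unfold auxT RB
      rw [show (1 : ℕ) / 2 + 1 = 1 from rfl]
      simp only [Finset.sum_range_one, pow_zero, Nat.cast_one, one_mul]
      rw [show (1 : ℕ) - 0 = 1 from rfl, Nat.choose_zero_right,
        show 1 - 0 + s = s + 1 from by omega]
      unfold RA
      have p1 : (n + 2 * (s + 1)).choose (s + 1)
          = (n + 1 + 2 * s).choose s + (n + 1 + 2 * s).choose (s + 1) := by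
        rw [show n + 2 * (s + 1) = (n + 1 + 2 * s) + 1 from by omega]
        exact Nat.choose_succ_succ (n + 1 + 2 * s) s
      have p2 : (n + 2 * (s + 1)).choose (n + (s + 1) + 1)
          = (n + 1 + 2 * s).choose (n + s + 1) + (n + 1 + 2 * s).choose (n + s + 2) := by
        rw [show n + 2 * (s + 1) = (n + 1 + 2 * s) + 1 from by omega,
          show n + (s + 1) + 1 = (n + s + 1) + 1 from by omega]
        exact Nat.choose_succ_succ (n + 1 + 2 * s) (n + s + 1)
      have psym : (n + 1 + 2 * s).choose s = (n + 1 + 2 * s).choose (n + s + 1) := by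
        rw [← Nat.choose_symm (show s ≤ n + 1 + 2 * s from by omega),
          show n + 1 + 2 * s - s = n + s + 1 from by omega]
      rw [p1, p2,
        show n + 1 + s + 1 = n + s + 2 from by omega]
      push_cast [psym]
      ring
    | (m + 2) =>
      intro s
      rw [auxT_rec, ih (m + 1) (by omega), ih m (by omega)]
      unfold RB
      have p1 : (n + (m + 1) + 2 * (s + 1)).choose (m + s + 2)
          = (n + (m + 2) + 2 * s).choose (m + s + 1) + (n + (m + 2) + 2 * s).choose (m + s + 2) := by
        rw [show n + (m + 1) + 2 * (s + 1) = (n + (m + 2) + 2 * s) + 1 from by omega]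
        exact Nat.choose_succ_succ (n + (m + 2) + 2 * s) (m + s + 1)
      have p2 : (n + (m + 1) + 2 * (s + 1)).choose (n + m + s + 3)
          = (n + (m + 2) + 2 * s).choose (n + m + s + 2) + (n + (m + 2) + 2 * s).choose (n + m + s + 3) := by
        rw [show n + (m + 1) + 2 * (s + 1) = (n + (m + 2) + 2 * s) + 1 from by omega]
        exact Nat.choose_succ_succ (n + (m + 2) + 2 * s) (n + m + s + 2)
      rw [show (m + 1) + (s + 1) = m + s + 2 from by omega,
        show n + (m + 1) + (s + 1) + 1 = n + m + s + 3 from by omega,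
        show n + m + 2 * (s + 1) = n + (m + 2) + 2 * s from by omega,
        show m + (s + 1) = m + s + 1 from by omega,
        show n + m + (s + 1) + 1 = n + m + s + 2 from by omega,
        show (m + 2) + s = m + s + 2 from by omega,
        show n + (m + 2) + s + 1 = n + m + s + 3 from by omega]
      push_cast [p1, p2]
      ring

/-- for n, m ≥ 1,
Σ_j Σ_k (-1)^{j+k} C(n-j,j) C(m-k,k) Cat(n+m-j-k) = C(n+m,n),
sums over 0 ≤ j ≤ ⌊n/2⌋, 0 ≤ k ≤ ⌊m/2⌋. -/
theorem stmt_5 (n m : ℕ) (hn : 1 ≤ n) (hm : 1 ≤ m) :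
    ∑ j ∈ Finset.range (n / 2 + 1), ∑ k ∈ Finset.range (m / 2 + 1),
        (-1 : ℤ) ^ (j + k) * ((n - j).choose j : ℤ) * ((m - k).choose k : ℤ) *
          (catalan (n + m - j - k) : ℤ)
      = ((n + m).choose n : ℤ) := by
  rw [Finset.sum_comm]
  have hstep : ∀ k ∈ Finset.range (m / 2 + 1),
      (∑ j ∈ Finset.range (n / 2 + 1),
        (-1 : ℤ) ^ (j + k) * ((n - j).choose j : ℤ) * ((m - k).choose k : ℤ) *
          (catalan (n + m - j - k) : ℤ))
      = (-1 : ℤ) ^ k * ((m - k).choose k : ℤ) * RA n (m - k + 0) := by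
    intro k hk
    simp only [Finset.mem_range] at hk
    rw [← lemA n (m - k + 0)]
    unfold auxT
    rw [Finset.mul_sum]
    refine Finset.sum_congr rfl ?_
    intro j hj
    simp only [Finset.mem_range] at hj
    have harg : n + m - j - k = n - j + (m - k + 0) := by omega
    rw [harg, pow_add]
    unfold catZ
    ring
  rw [Finset.sum_congr rfl hstep]
  have : (∑ k ∈ Finset.range (m / 2 + 1),
      (-1 : ℤ) ^ k * ((m - k).choose k : ℤ) * RA n (m - k + 0)) = auxT (RA n) m 0 := rfl
  rw [this, lemB]
  unfold RB
  rw [show n + m + 2 * 0 = n + m from by omega, show m + 0 = m from by omega,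
    Nat.choose_eq_zero_of_lt (show n + m < n + m + 0 + 1 from by omega),
    show (n + m).choose m = (n + m).choose n from by rw [Nat.add_comm n m, Nat.choose_symm_add]]
  push_cast
  ring
end

section
/- Define f(k, n) for k ≥ 0, n ≥ 1 by f(0, n) = 1 and f(k, n) = Σ_{l=0}^{k} C_{k-l} · f(l, n-1) for k ≥ 1 (with f(k,0) suitably initialized, e.g. f(k,1) = C_k). Then for each fixed k, the function n ↦ f(k, n) agrees with a polynomial in n of degree k. -/
open Polynomial Finset

lemma delta_pow_natDegree (m : ℕ) :
    ((X + 1 : ℚ[X]) ^ (m+1) - X ^ (m+1)).natDegree = m ∧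
    ((X + 1 : ℚ[X]) ^ (m+1) - X ^ (m+1)).coeff m = (m+1 : ℚ) := by
  have hco : ∀ k, ((X + 1 : ℚ[X]) ^ (m+1) - X ^ (m+1)).coeff k =
      ((m+1).choose k : ℚ) - if k = m+1 then 1 else 0 := by
    intro k
    rw [Polynomial.coeff_sub, coeff_X_add_one_pow, Polynomial.coeff_X_pow]
  constructor
  · apply le_antisymm
    · rw [Polynomial.natDegree_le_iff_coeff_eq_zero]
      intro j hj
      rw [hco]
      rcases eq_or_lt_of_le (Nat.succ_le_of_lt hj) with h | h
      · simp [← h]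
      · rw [if_neg (by omega), Nat.choose_eq_zero_of_lt (by omega)]
        simp
    · apply Polynomial.le_natDegree_of_ne_zero
      rw [hco, if_neg (by omega), Nat.choose_succ_self_right]
      push_cast
      intro hzero
      linarith [Nat.cast_nonneg (α := ℚ) m]
  · rw [hco, if_neg (by omega), Nat.choose_succ_self_right]
    push_cast; ring

lemma delta_surj : ∀ d : ℕ, ∀ S : ℚ[X], S.natDegree ≤ d →
    ∃ R : ℚ[X], R.comp (X + 1) - R = S ∧ (S = 0 → R = 0) ∧
      (S ≠ 0 → R.natDegree = S.natDegree + 1) := by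
  intro d
  induction d with
  | zero =>
    intro S hS
    by_cases h : S = 0
    · exact ⟨0, by simp [h], fun _ => rfl, fun h' => absurd h h'⟩
    · refine ⟨C (S.coeff 0) * X, ?_, fun h' => absurd h' h, ?_⟩
      · have hS0 : S = C (S.coeff 0) := (Polynomial.eq_C_of_natDegree_le_zero hS)
        rw [mul_comp, C_comp, X_comp]
        ring_nf
        exact hS0.symm
      · intro _
        have hc : S.coeff 0 ≠ 0 := by
          intro hc
          apply h
          rw [Polynomial.eq_C_of_natDegree_le_zero hS, hc, map_zero]
        rw [Polynomial.natDegree_C_mul_X _ hc]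
        omega
  | succ d ih =>
    intro S hS
    by_cases h : S = 0
    · exact ⟨0, by simp [h], fun _ => rfl, fun h' => absurd h h'⟩
    rcases Nat.lt_or_ge S.natDegree (d+1) with hlt | hge
    · exact ih S (by omega)
    have hdeg : S.natDegree = d + 1 := le_antisymm hS hge
    have hc0 : S.leadingCoeff ≠ 0 := Polynomial.leadingCoeff_ne_zero.mpr h
    have hd2 : ((d:ℚ)+2) ≠ 0 := by positivity
    have ha : S.leadingCoeff / ((d:ℚ)+2) ≠ 0 := div_ne_zero hc0 hd2
    obtain ⟨hdp, hcp⟩ := delta_pow_natDegree (d+1)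
    have hDTeq : (C (S.leadingCoeff / ((d:ℚ)+2)) * X ^ (d+2)).comp (X+1)
        - C (S.leadingCoeff / ((d:ℚ)+2)) * X ^ (d+2)
        = C (S.leadingCoeff / ((d:ℚ)+2)) * ((X + 1 : ℚ[X]) ^ (d+1+1) - X ^ (d+1+1)) := by
      rw [mul_comp, C_comp, pow_comp, X_comp]
      ring
    have hDTdeg : (C (S.leadingCoeff / ((d:ℚ)+2)) * ((X + 1 : ℚ[X]) ^ (d+1+1) - X ^ (d+1+1))).natDegree = d + 1 := by
      rw [Polynomial.natDegree_C_mul ha, hdp]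
    have hDTlead : (C (S.leadingCoeff / ((d:ℚ)+2)) * ((X + 1 : ℚ[X]) ^ (d+1+1) - X ^ (d+1+1))).leadingCoeff = S.leadingCoeff := by
      rw [Polynomial.leadingCoeff, hDTdeg, Polynomial.coeff_C_mul, hcp]
      push_cast
      rw [show (d:ℚ)+1+1 = (d:ℚ)+2 from by ring, div_mul_cancel₀ _ hd2]
    have hDTne : (C (S.leadingCoeff / ((d:ℚ)+2)) * ((X + 1 : ℚ[X]) ^ (d+1+1) - X ^ (d+1+1))) ≠ 0 := by
      intro h0
      rw [h0] at hDTlead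
      exact hc0 (by simpa using hDTlead.symm)
    have hsub : (S - C (S.leadingCoeff / ((d:ℚ)+2)) * ((X + 1 : ℚ[X]) ^ (d+1+1) - X ^ (d+1+1))).natDegree ≤ d := by
      by_cases hSD : S - C (S.leadingCoeff / ((d:ℚ)+2)) * ((X + 1 : ℚ[X]) ^ (d+1+1) - X ^ (d+1+1)) = 0
      · simp [hSD]
      have hlt := Polynomial.degree_sub_lt (by
          rw [Polynomial.degree_eq_natDegree h, Polynomial.degree_eq_natDegree hDTne, hdeg, hDTdeg])
        h hDTlead.symm
      rw [Polynomial.degree_eq_natDegree h, hdeg] at hlt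
      have h2 := (Polynomial.natDegree_lt_iff_degree_lt hSD).mpr (by exact_mod_cast hlt)
      omega
    obtain ⟨R', hR'1, hR'0, hR'2⟩ := ih _ hsub
    refine ⟨C (S.leadingCoeff / ((d:ℚ)+2)) * X ^ (d+2) + R', ?_, fun h' => absurd h' h, ?_⟩
    · rw [add_comp]
      have hre : (C (S.leadingCoeff / ((d:ℚ)+2)) * X ^ (d+2)).comp (X+1) + R'.comp (X + 1)
          - (C (S.leadingCoeff / ((d:ℚ)+2)) * X ^ (d+2) + R')
          = ((C (S.leadingCoeff / ((d:ℚ)+2)) * X ^ (d+2)).comp (X+1) - C (S.leadingCoeff / ((d:ℚ)+2)) * X ^ (d+2))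
            + (R'.comp (X + 1) - R') := by ring
      rw [hre, hDTeq, hR'1]
      ring
    · intro _
      have hTdeg : (C (S.leadingCoeff / ((d:ℚ)+2)) * X ^ (d+2)).natDegree = d + 2 :=
        Polynomial.natDegree_C_mul_X_pow _ _ ha
      have hR'deg : R'.natDegree < (C (S.leadingCoeff / ((d:ℚ)+2)) * X ^ (d+2)).natDegree := by
        by_cases hz : S - C (S.leadingCoeff / ((d:ℚ)+2)) * ((X + 1 : ℚ[X]) ^ (d+1+1) - X ^ (d+1+1)) = 0
        · rw [hR'0 hz]; simp [hTdeg]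
        · have := hR'2 hz
          rw [this, hTdeg]
          omega
      rw [Polynomial.natDegree_add_eq_left_of_natDegree_lt hR'deg, hTdeg, hdeg]

lemma catalan_pos' (n : ℕ) : 0 < catalan n := by
  rcases Nat.eq_zero_or_pos (catalan n) with h | h
  · have hc := succ_mul_catalan_eq_centralBinom n
    rw [h, mul_zero] at hc
    have := n.centralBinom_pos
    omega
  · exact h

/-- with f(0,n) = 1, f(k,1) = C_k and
f(k,n) = Σ_{l=0}^k C_{k-l} f(l,n-1) for k ≥ 1, n ≥ 2, the function n ↦ f(k,n)
agrees (for n ≥ 1) with a polynomial in n of degree k. -/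
theorem stmt_6 (f : ℕ → ℕ → ℕ)
    (h0 : ∀ n, f 0 n = 1)
    (h1 : ∀ k, f k 1 = catalan k)
    (hrec : ∀ k n, 1 ≤ k → 2 ≤ n →
      f k n = ∑ l ∈ Finset.range (k + 1), catalan (k - l) * f l (n - 1)) :
    ∀ k, ∃ P : Polynomial ℚ, P.natDegree = k ∧ ∀ n, 1 ≤ n → (f k n : ℚ) = P.eval (n : ℚ) := by
  intro k
  induction k using Nat.strong_induction_on with
  | _ k ih =>
  rcases Nat.eq_zero_or_pos k with rfl | hk
  · exact ⟨1, by simp, fun n hn => by simp [h0 n]⟩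
  choose P hPdeg hPeval using ih
  set Q : ℕ → ℚ[X] := fun l => if hl : l < k then P l hl else 0 with hQ
  have hQdeg : ∀ l, l < k → (Q l).natDegree = l := by
    intro l hl; simp only [hQ, dif_pos hl]; exact hPdeg l hl
  have hQeval : ∀ l, l < k → ∀ n : ℕ, 1 ≤ n → (f l n : ℚ) = (Q l).eval (n:ℚ) := by
    intro l hl n hn; simp only [hQ, dif_pos hl]; exact hPeval l hl n hn
  set G : ℚ[X] := ∑ l ∈ Finset.range k, C ((catalan (k - l) : ℚ)) * Q l with hG
  have hGeval : ∀ n : ℕ, 1 ≤ n →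
      G.eval (n:ℚ) = ∑ l ∈ Finset.range k, (catalan (k - l) : ℚ) * f l n := by
    intro n hn
    rw [hG, Polynomial.eval_finset_sum]
    refine Finset.sum_congr rfl fun l hl => ?_
    rw [Polynomial.eval_mul, Polynomial.eval_C, ← hQeval l (Finset.mem_range.mp hl) n hn]
  have hGne : G ≠ 0 := by
    have hpos : (0:ℚ) < G.eval 1 := by
      have hev1 := hGeval 1 le_rfl
      rw [Nat.cast_one] at hev1
      rw [hev1]
      apply Finset.sum_pos
      · intro l hl
        have h1l : f l 1 = catalan l := h1 l
        rw [h1l]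
        exact mul_pos (by exact_mod_cast catalan_pos' _) (by exact_mod_cast catalan_pos' _)
      · exact ⟨0, Finset.mem_range.mpr hk⟩
    intro h0'
    rw [h0'] at hpos; simp at hpos
  have hGdeg : G.natDegree = k - 1 := by
    have hk1 : k = (k - 1) + 1 := by omega
    have hsplit : G = (∑ l ∈ Finset.range (k-1), C ((catalan (k - l) : ℚ)) * Q l)
        + C ((catalan (k - (k-1)) : ℚ)) * Q (k-1) := by
      rw [hG]
      conv_lhs => rw [hk1]
      rw [Finset.sum_range_succ]
      simp only [show k - 1 + 1 = k from hk1.symm]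
    have hcat1 : k - (k-1) = 1 := by omega
    have hQk1ne : Q (k-1) ≠ 0 := by
      intro hz
      have hev := hQeval (k-1) (by omega) 1 le_rfl
      rw [hz] at hev
      simp [h1] at hev
      have := catalan_pos' (k-1)
      omega
    have hterm : (C ((catalan (k - (k-1)) : ℚ)) * Q (k-1)).natDegree = k - 1 := by
      rw [hcat1, catalan_one]
      simp only [Nat.cast_one, Polynomial.C_1, one_mul]
      exact hQdeg (k-1) (by omega)
    rcases Nat.lt_or_ge k 2 with hk2 | hk2
    · have : k = 1 := by omega
      subst this
      simp only [hsplit]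
      simpa using hterm
    · have hsum : (∑ l ∈ Finset.range (k-1), C ((catalan (k - l) : ℚ)) * Q l).natDegree
          < (C ((catalan (k - (k-1)) : ℚ)) * Q (k-1)).natDegree := by
      -- sum bound
        rw [hterm]
        calc (∑ l ∈ Finset.range (k-1), C ((catalan (k - l) : ℚ)) * Q l).natDegree
            ≤ k - 2 := by
              apply Polynomial.natDegree_sum_le_of_forall_le
              intro l hl
              refine le_trans (Polynomial.natDegree_C_mul_le _ _) ?_
              rw [hQdeg l (by have := Finset.mem_range.mp hl; omega)]
              have := Finset.mem_range.mp hl; omega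
          _ < k - 1 := by omega
      rw [hsplit, Polynomial.natDegree_add_eq_right_of_natDegree_lt hsum, hterm]
  obtain ⟨R, hR1, -, hR2⟩ := delta_surj G.natDegree G le_rfl
  have hRdeg : R.natDegree = k := by
    rw [hR2 hGne, hGdeg]; omega
  refine ⟨R + C ((catalan k : ℚ) - R.eval 1), by
    rw [Polynomial.natDegree_add_C, hRdeg], ?_⟩
  have hstep : ∀ n : ℕ, R.eval ((n:ℚ) + 1) - R.eval (n:ℚ) = G.eval (n:ℚ) := by
    intro n
    have := congrArg (Polynomial.eval (n : ℚ)) hR1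
    simpa [Polynomial.eval_comp] using this
  intro n hn
  induction n, hn using Nat.le_induction with
  | base =>
    rw [h1]
    simp
  | succ n hn ihn =>
    have hfe : f k (n+1) = (∑ l ∈ Finset.range k, catalan (k - l) * f l n) + f k n := by
      rw [hrec k (n+1) hk (by omega)]
      simp only [Nat.add_sub_cancel]
      rw [Finset.sum_range_succ, Nat.sub_self, catalan_zero, one_mul]
    rw [hfe]
    push_cast
    rw [ihn]

    have := hstep n
    rw [← hGeval n hn] at *
    simp only [Polynomial.eval_add, Polynomial.eval_C] at *
    linarith [hstep n]
end

section
/- Every near-edge admits a unique factorization into prime near-edges: if E = F_1 · F_2 · … · F_r = G_1 · G_2 · … · G_s are two factorizations of a near-edge E into prime near-edges, then r = s and F_i = G_i for all i. (Here a factorization E = E_1 · E_2 splits E at a lower extremal vertex P_k such that all points of E \ E_i lie strictly above every line through two distinct points of E_i, i = 1,2.) -/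
/-- A near-edge of weight n: n+1 points of ℝ² with strictly increasing x-coordinates,
the first and the last one on the x-axis. -/
structure NearEdge (n : ℕ) where
  pts : Fin (n + 1) → ℝ × ℝ
  mono : StrictMono fun i => (pts i).1
  first : (pts 0).2 = 0
  last : (pts (Fin.last n)).2 = 0

/-- `Q` lies strictly above the line through `A` and `B` (where `A.1 < B.1`). -/
def StrictlyAbove (A B Q : ℝ × ℝ) : Prop :=
  0 < (B.1 - A.1) * (Q.2 - A.2) - (B.2 - A.2) * (Q.1 - A.1)

/-- The piece of `E` between indices `a` and `b` is a factor of `E`: every point of `E`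
outside the piece lies strictly above every line through two distinct points of the piece. -/
def PieceFactor {n : ℕ} (E : NearEdge n) (a b : ℕ) : Prop :=
  ∀ i j : Fin (n + 1), a ≤ i.val → i < j → j.val ≤ b →
    ∀ q : Fin (n + 1), (q.val < a ∨ b < q.val) →
      StrictlyAbove (E.pts i) (E.pts j) (E.pts q)

/-- The piece of `E` between indices `a` and `b` factorizes at the (lower extremal)
vertex of index `c`: all points of the piece outside each half lie strictly above
every line through two distinct points of that half. -/
def PieceSplitsAt {n : ℕ} (E : NearEdge n) (a c b : ℕ) : Prop :=
  a < c ∧ c < b ∧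
  (∀ i j : Fin (n + 1), a ≤ i.val → i < j → j.val ≤ c →
    ∀ q : Fin (n + 1), c < q.val → q.val ≤ b →
      StrictlyAbove (E.pts i) (E.pts j) (E.pts q)) ∧
  (∀ i j : Fin (n + 1), c ≤ i.val → i < j → j.val ≤ b →
    ∀ q : Fin (n + 1), a ≤ q.val → q.val < c →
      StrictlyAbove (E.pts i) (E.pts j) (E.pts q))

/-- The piece of `E` between indices `a` and `b` is prime: it admits no nontrivial
factorization. -/
def PiecePrime {n : ℕ} (E : NearEdge n) (a b : ℕ) : Prop :=
  a < b ∧ ¬ ∃ c, PieceSplitsAt E a c b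

/-- A factorization of the near-edge `E` into prime near-edges, recorded by the
increasing list `L` of cut indices `0 = k₀ < k₁ < … < k_r = n`: each piece is a
factor of `E` and is prime. -/
def IsPrimeFactorization {n : ℕ} (E : NearEdge n) (L : List ℕ) : Prop :=
  L.Chain' (· < ·) ∧ L.head? = some 0 ∧ L.getLast? = some n ∧
    ∀ p ∈ L.zip L.tail, PieceFactor E p.1 p.2 ∧ PiecePrime E p.1 p.2



private lemma mem_of_head'' {L : List ℕ} {a : ℕ} (h : L.head? = some a) : a ∈ L := by
  cases L with
  | nil => simp at h
  | cons x t => simp at h; simp [h]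

private lemma mem_of_getLast'' : ∀ {L : List ℕ} {a : ℕ}, L.getLast? = some a → a ∈ L
  | [], a => by simp
  | [x], a => by intro h; simp [List.getLast?] at h; simp [h]
  | x :: y :: t, a => by
      rw [List.getLast?_cons_cons]
      intro h
      exact List.mem_cons_of_mem _ (mem_of_getLast'' h)

private lemma cons_le_of_chain' {b : ℕ} {t : List ℕ} (h : List.Chain' (· < ·) (b :: t))
    {x : ℕ} (hx : x ∈ b :: t) : b ≤ x := by
  replace h := List.isChain_iff_pairwise.mp h
  rcases List.mem_cons.mp hx with rfl | hx
  · exact le_rfl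
  · exact ((List.pairwise_cons.mp h).1 x hx).le

private lemma zipMem : ∀ {L : List ℕ}, List.Chain' (· < ·) L → ∀ {p : ℕ × ℕ},
    p ∈ L.zip L.tail → p.1 < p.2 ∧ p.1 ∈ L ∧ p.2 ∈ L ∧ ∀ c ∈ L, c ≤ p.1 ∨ p.2 ≤ c
  | [] => by simp
  | [a] => by simp
  | a :: b :: t => by
    intro hch p hp
    have hch' : List.Chain' (· < ·) (b :: t) := hch.tail
    have hab : a < b := List.rel_of_chain_cons hch
    have hzip : (a :: b :: t).zip (a :: b :: t).tail = (a, b) :: (b :: t).zip t := rfl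
    rw [hzip] at hp
    rcases List.mem_cons.mp hp with rfl | hp
    · refine ⟨hab, by simp, by simp, ?_⟩
      intro c hc
      rcases List.mem_cons.mp hc with rfl | hc
      · exact Or.inl le_rfl
      · exact Or.inr (cons_le_of_chain' hch' hc)
    · have hp' : p ∈ (b :: t).zip (b :: t).tail := hp
      obtain ⟨h1, h2, h3, h4⟩ := zipMem hch' hp'
      refine ⟨h1, List.mem_cons_of_mem _ h2, List.mem_cons_of_mem _ h3, ?_⟩
      intro c hc
      rcases List.mem_cons.mp hc with rfl | hc
      · exact Or.inl (le_trans hab.le (cons_le_of_chain' hch' h2))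
      · exact h4 c hc

private lemma locate2 : ∀ (L : List ℕ), List.Chain' (· < ·) L → ∀ i j : ℕ, i ≤ j →
    (∃ a ∈ L, a ≤ i) → (∃ K ∈ L, j ≤ K) →
    (∃ p ∈ L.zip L.tail, p.1 ≤ i ∧ j ≤ p.2) ∨ (∃ c ∈ L, i < c ∧ c < j) ∨ (i = j ∧ i ∈ L)
  | [] => by rintro _ i j _ ⟨a, ha, _⟩ _; simp at ha
  | [a] => by
    rintro _ i j hij ⟨a0, ha0, h1⟩ ⟨K, hK, h2⟩
    simp at ha0 hK
    have hi : i = j := by omega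
    have ha : i = a := by omega
    subst hi; subst ha
    exact Or.inr (Or.inr ⟨rfl, by simp⟩)
  | a :: b :: t => by
    rintro hch i j hij ⟨a0, ha0, ha0i⟩ ⟨K, hK, hjK⟩
    have hch' : List.Chain' (· < ·) (b :: t) := hch.tail
    have hab : a < b := List.rel_of_chain_cons hch
    by_cases hbi : b ≤ i
    · have hK' : K ∈ b :: t := by
        rcases List.mem_cons.mp hK with rfl | hK
        · omega
        · exact hK
      rcases locate2 (b :: t) hch' i j hij ⟨b, by simp, hbi⟩ ⟨K, hK', hjK⟩ with ⟨p, hp, h⟩ | ⟨c, hc, h⟩ | ⟨h, hm⟩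
      · exact Or.inl ⟨p, List.mem_cons_of_mem _ hp, h⟩
      · exact Or.inr (Or.inl ⟨c, List.mem_cons_of_mem _ hc, h⟩)
      · exact Or.inr (Or.inr ⟨h, List.mem_cons_of_mem _ hm⟩)
    · have hai : a ≤ i := by
        rcases List.mem_cons.mp ha0 with rfl | h
        · exact ha0i
        · exact absurd (le_trans (cons_le_of_chain' hch' h) ha0i) hbi
      by_cases hjb : j ≤ b
      · exact Or.inl ⟨(a, b), by simp, hai, hjb⟩
      · exact Or.inr (Or.inl ⟨b, by simp, by omega, by omega⟩)

private lemma allLe : ∀ {L : List ℕ}, List.Chain' (· < ·) L → ∀ {m : ℕ},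
    L.getLast? = some m → ∀ a ∈ L, a ≤ m
  | [] => by simp
  | [x] => by intro _ m h; simp [List.getLast?] at h; simp [h]
  | x :: y :: t => by
    intro hch m hlast a ha
    rw [List.getLast?_cons_cons] at hlast
    have hch' : List.Chain' (· < ·) (y :: t) := hch.tail
    rcases List.mem_cons.mp ha with rfl | ha
    · have hm : m ∈ y :: t := mem_of_getLast'' hlast
      have := cons_le_of_chain' hch' hm
      have := List.rel_of_chain_cons hch
      omega
    · exact allLe hch' hlast a ha

private lemma lastOfMax : ∀ {L : List ℕ}, List.Chain' (· < ·) L → ∀ {m : ℕ},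
    m ∈ L → (∀ a ∈ L, a ≤ m) → L.getLast? = some m
  | [] => by simp
  | [x] => by intro _ m hm _; simp at hm; simp [hm, List.getLast?]
  | x :: y :: t => by
    intro hch m hm hall
    rw [List.getLast?_cons_cons]
    have hch' : List.Chain' (· < ·) (y :: t) := hch.tail
    have hm' : m ∈ y :: t := by
      rcases List.mem_cons.mp hm with rfl | h
      · have := hall y (by simp)
        have := List.rel_of_chain_cons hch
        omega
      · exact h
    exact lastOfMax hch' hm' (fun a ha => hall a (List.mem_cons_of_mem _ ha))

private lemma headOfMin {L : List ℕ} (hch : List.Chain' (· < ·) L) (h0 : 0 ∈ L) :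
    L.head? = some 0 := by
  cases L with
  | nil => simp at h0
  | cons a t =>
    rcases List.mem_cons.mp h0 with rfl | h
    · rfl
    · replace hch := List.isChain_iff_pairwise.mp hch
      have := (List.pairwise_cons.mp hch).1 0 h
      omega

-- geometric transitivity
private lemma lemTrans (A B C Q : ℝ × ℝ) (h1 : A.1 < B.1) (h2 : B.1 < C.1)
    (hq : Q.1 < A.1 ∨ C.1 < Q.1) (hAB : StrictlyAbove A B Q) (hBC : StrictlyAbove B C Q) :
    StrictlyAbove A C Q := by
  unfold StrictlyAbove at *
  have key : ((C.1 - A.1) * (Q.2 - A.2) - (C.2 - A.2) * (Q.1 - A.1)) * (Q.1 - B.1)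
      = ((B.1 - A.1) * (Q.2 - A.2) - (B.2 - A.2) * (Q.1 - A.1)) * (Q.1 - C.1)
      + ((C.1 - B.1) * (Q.2 - B.2) - (C.2 - B.2) * (Q.1 - B.1)) * (Q.1 - A.1) := by ring
  rcases hq with hq | hq
  · nlinarith
  · nlinarith

/-- a global cut of the near-edge -/
def GoodCut {n : ℕ} (E : NearEdge n) (c : ℕ) : Prop :=
  0 < c ∧ c < n ∧
  (∀ i j : Fin (n + 1), i < j → j.val ≤ c →
    ∀ q : Fin (n + 1), c < q.val → StrictlyAbove (E.pts i) (E.pts j) (E.pts q)) ∧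
  (∀ i j : Fin (n + 1), c ≤ i.val → i < j →
    ∀ q : Fin (n + 1), q.val < c → StrictlyAbove (E.pts i) (E.pts j) (E.pts q))

section Main
variable {n : ℕ} {E : NearEdge n} {L : List ℕ}

private lemma lemA_s18 (hL : IsPrimeFactorization E L) (d : ℕ) :
    ∀ i j q : Fin (n + 1), j.val - i.val ≤ d → i < j →
    (∃ K ∈ L, j.val ≤ K ∧ K < q.val) → StrictlyAbove (E.pts i) (E.pts j) (E.pts q) := by
  obtain ⟨hch, hhead, hlast, hpieces⟩ := hL
  have h0 : 0 ∈ L := mem_of_head'' hhead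
  induction d with
  | zero =>
    intro i j q hd hij _
    rw [Fin.lt_def] at hij; omega
  | succ d ih =>
    intro i j q hd hij hcut
    obtain ⟨K, hKmem, hjK, hKq⟩ := hcut
    have hij' : i.val < j.val := hij
    rcases locate2 L hch i.val j.val hij'.le ⟨0, h0, Nat.zero_le _⟩ ⟨K, hKmem, hjK⟩ with
      ⟨p, hp, hpi, hjp⟩ | ⟨c, hcmem, hic, hcj⟩ | ⟨heq, _⟩
    · -- same piece
      have hq2 : p.2 < q.val := by
        rcases (zipMem hch hp).2.2.2 K hKmem with h | h <;> by_contra hcon <;> omega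
      exact (hpieces p hp).1 i j hpi hij hjp q (Or.inr hq2)
    · -- split at a cut c strictly between
      have hcn : c < n + 1 := lt_trans hcj j.isLt
      set C : Fin (n + 1) := ⟨c, hcn⟩ with hC
      have h1 : StrictlyAbove (E.pts i) (E.pts C) (E.pts q) :=
        ih i C q (by simp [hC]; omega) (by rw [Fin.lt_def]; exact hic)
          ⟨c, hcmem, le_rfl, by omega⟩
      have h2 : StrictlyAbove (E.pts C) (E.pts j) (E.pts q) :=
        ih C j q (by simp [hC]; omega) (by rw [Fin.lt_def]; exact hcj)
          ⟨K, hKmem, hjK, hKq⟩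
      exact lemTrans _ _ _ _ (E.mono (show i < C by rw [Fin.lt_def]; exact hic))
        (E.mono (show C < j by rw [Fin.lt_def]; exact hcj))
        (Or.inr (E.mono (show j < q by rw [Fin.lt_def]; omega))) h1 h2
    · omega

private lemma lemB_s18 (hL : IsPrimeFactorization E L) (d : ℕ) :
    ∀ i j q : Fin (n + 1), j.val - i.val ≤ d → i < j →
    (∃ K ∈ L, q.val < K ∧ K ≤ i.val) → StrictlyAbove (E.pts i) (E.pts j) (E.pts q) := by
  obtain ⟨hch, hhead, hlast, hpieces⟩ := hL
  have h0 : 0 ∈ L := mem_of_head'' hhead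
  have hnL : n ∈ L := mem_of_getLast'' hlast
  induction d with
  | zero =>
    intro i j q hd hij _
    rw [Fin.lt_def] at hij; omega
  | succ d ih =>
    intro i j q hd hij hcut
    obtain ⟨K, hKmem, hqK, hKi⟩ := hcut
    have hij' : i.val < j.val := hij
    have hjn : j.val ≤ n := Nat.lt_succ_iff.mp j.isLt
    rcases locate2 L hch i.val j.val hij'.le ⟨0, h0, Nat.zero_le _⟩ ⟨n, hnL, hjn⟩ with
      ⟨p, hp, hpi, hjp⟩ | ⟨c, hcmem, hic, hcj⟩ | ⟨heq, _⟩
    · -- same piece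
      have hq1 : q.val < p.1 := by
        rcases (zipMem hch hp).2.2.2 K hKmem with h | h <;> by_contra hcon <;> omega
      exact (hpieces p hp).1 i j hpi hij hjp q (Or.inl hq1)
    · -- split
      have hcn : c < n + 1 := lt_trans hcj j.isLt
      set C : Fin (n + 1) := ⟨c, hcn⟩ with hC
      have h1 : StrictlyAbove (E.pts i) (E.pts C) (E.pts q) :=
        ih i C q (by simp [hC]; omega) (by rw [Fin.lt_def]; exact hic)
          ⟨K, hKmem, hqK, hKi⟩
      have h2 : StrictlyAbove (E.pts C) (E.pts j) (E.pts q) :=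
        ih C j q (by simp [hC]; omega) (by rw [Fin.lt_def]; exact hcj)
          ⟨K, hKmem, hqK, by simp [hC]; omega⟩
      exact lemTrans _ _ _ _ (E.mono (show i < C by rw [Fin.lt_def]; exact hic))
        (E.mono (show C < j by rw [Fin.lt_def]; exact hcj))
        (Or.inl (E.mono (show q < i by rw [Fin.lt_def]; omega))) h1 h2
    · omega

private lemma elemIsGood (hL : IsPrimeFactorization E L) {K : ℕ} (hK : K ∈ L)
    (hK0 : K ≠ 0) (hKn : K ≠ n) : GoodCut E K := by
  have hKle : K ≤ n := allLe hL.1 hL.2.2.1 K hK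
  refine ⟨Nat.pos_of_ne_zero hK0, lt_of_le_of_ne hKle hKn, ?_, ?_⟩
  · intro i j hij hjK q hq
    exact lemA_s18 hL (j.val - i.val) i j q le_rfl hij ⟨K, hK, hjK, hq⟩
  · intro i j hKi hij q hq
    exact lemB_s18 hL (j.val - i.val) i j q le_rfl hij ⟨K, hK, hq, hKi⟩

private lemma goodSplits (hG : GoodCut E c) {a b : ℕ} (hac : a < c) (hcb : c < b) :
    PieceSplitsAt E a c b := by
  refine ⟨hac, hcb, ?_, ?_⟩
  · intro i j _ hij hjc q hcq _
    exact hG.2.2.1 i j hij hjc q hcq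
  · intro i j hci hij _ q _ hqc
    exact hG.2.2.2 i j hci hij q hqc

private lemma cutMemL (hL : IsPrimeFactorization E L) {c : ℕ} (hG : GoodCut E c) : c ∈ L := by
  by_contra hc
  have h0 : 0 ∈ L := mem_of_head'' hL.2.1
  have hnL : n ∈ L := mem_of_getLast'' hL.2.2.1
  rcases locate2 L hL.1 c c le_rfl ⟨0, h0, Nat.zero_le _⟩ ⟨n, hnL, hG.2.1.le⟩ with
    ⟨p, hp, hpc, hcp⟩ | ⟨c', _, h1, h2⟩ | ⟨_, hm⟩
  · have h1 : p.1 < c := lt_of_le_of_ne hpc (fun h => hc (h ▸ (zipMem hL.1 hp).2.1))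
    have h2 : c < p.2 := lt_of_le_of_ne hcp (fun h => hc (h ▸ (zipMem hL.1 hp).2.2.1))
    exact (hL.2.2.2 p hp).2.2 ⟨c, goodSplits hG h1 h2⟩
  · omega
  · exact hc hm

end Main

open Classical in
/-- The list of all global cuts of `E`, in increasing order. -/
noncomputable def cutList (n : ℕ) (E : NearEdge n) : List ℕ :=
  ((Finset.range (n + 1)).filter (fun c => c = 0 ∨ c = n ∨ GoodCut E c)).sort (· ≤ ·)

section Main2
variable {n : ℕ} {E : NearEdge n}

private lemma mem_cutList {c : ℕ} :
    c ∈ cutList n E ↔ c < n + 1 ∧ (c = 0 ∨ c = n ∨ GoodCut E c) := by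
  classical
  simp [cutList, Finset.mem_sort, Finset.mem_filter, Finset.mem_range]

private lemma cutList_chain : List.Chain' (· < ·) (cutList n E) :=
  List.isChain_iff_pairwise.mpr (Finset.sortedLT_sort _).pairwise

private lemma cutList_isPF : IsPrimeFactorization E (cutList n E) := by
  have hch := cutList_chain (n := n) (E := E)
  refine ⟨hch, headOfMin hch (mem_cutList.mpr ⟨Nat.succ_pos n, Or.inl rfl⟩),
    lastOfMax hch (mem_cutList.mpr ⟨Nat.lt_succ_self n, Or.inr (Or.inl rfl)⟩)
      (fun a ha => by have := (mem_cutList.mp ha).1; omega), ?_⟩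
  intro p hp
  obtain ⟨hab, hamem, hbmem, hbetween⟩ := zipMem hch hp
  obtain ⟨han, hCa⟩ := mem_cutList.mp hamem
  obtain ⟨hbn, hCb⟩ := mem_cutList.mp hbmem
  constructor
  · -- PieceFactor
    intro i j hai hij hjb q hq
    have hij' : i.val < j.val := hij
    have hqn : q.val < n + 1 := q.isLt
    rcases hq with hq | hq
    · rcases hCa with h | h | hGa
      · omega
      · omega
      · exact hGa.2.2.2 i j hai hij q hq
    · rcases hCb with h | h | hGb
      · omega
      · omega
      · exact hGb.2.2.1 i j hij hjb q hq
  · -- PiecePrime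
    refine ⟨hab, ?_⟩
    rintro ⟨c, hac, hcb, hs1, hs2⟩
    have hGc : GoodCut E c := by
      refine ⟨by omega, by omega, ?_, ?_⟩
      · intro i j hij hjc q hcq
        have hij' : i.val < j.val := hij
        have hqn : q.val < n + 1 := q.isLt
        by_cases hqb : p.2 < q.val
        · rcases hCb with h | h | hGb
          · omega
          · omega
          · exact hGb.2.2.1 i j hij (by omega) q hqb
        · push_neg at hqb
          by_cases hai : p.1 ≤ i.val
          · exact hs1 i j hai hij hjc q hcq hqb
          · push_neg at hai
            rcases hCa with h | h | hGa
            · omega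
            · omega
            · by_cases hja : j.val ≤ p.1
              · exact hGa.2.2.1 i j hij hja q (by omega)
              · push_neg at hja
                set A : Fin (n + 1) := ⟨p.1, by omega⟩ with hA
                have h1 : StrictlyAbove (E.pts i) (E.pts A) (E.pts q) :=
                  hGa.2.2.1 i A (Fin.lt_def.mpr hai) le_rfl q (by omega)
                have h2 : StrictlyAbove (E.pts A) (E.pts j) (E.pts q) :=
                  hs1 A j le_rfl (Fin.lt_def.mpr hja) hjc q hcq hqb
                exact lemTrans _ _ _ _ (E.mono (Fin.lt_def.mpr hai : i < A))
                  (E.mono (Fin.lt_def.mpr hja : A < j))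
                  (Or.inr (E.mono (Fin.lt_def.mpr (by omega) : j < q))) h1 h2
      · intro i j hci hij q hqc
        have hij' : i.val < j.val := hij
        have hjn : j.val < n + 1 := j.isLt
        by_cases hqa : q.val < p.1
        · rcases hCa with h | h | hGa
          · omega
          · omega
          · exact hGa.2.2.2 i j (by omega) hij q hqa
        · push_neg at hqa
          by_cases hjb : j.val ≤ p.2
          · exact hs2 i j hci hij hjb q hqa hqc
          · push_neg at hjb
            rcases hCb with h | h | hGb
            · omega
            · omega
            · by_cases hbi : p.2 ≤ i.val
              · exact hGb.2.2.2 i j hbi hij q (by omega)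
              · push_neg at hbi
                set B : Fin (n + 1) := ⟨p.2, by omega⟩ with hB
                have h1 : StrictlyAbove (E.pts i) (E.pts B) (E.pts q) :=
                  hs2 i B hci (Fin.lt_def.mpr hbi) le_rfl q hqa hqc
                have h2 : StrictlyAbove (E.pts B) (E.pts j) (E.pts q) :=
                  hGb.2.2.2 B j le_rfl (Fin.lt_def.mpr hjb) q (by omega)
                exact lemTrans _ _ _ _ (E.mono (Fin.lt_def.mpr hbi : i < B))
                  (E.mono (Fin.lt_def.mpr hjb : B < j))
                  (Or.inl (E.mono (Fin.lt_def.mpr (by omega) : q < i))) h1 h2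
    have hcmem : c ∈ cutList n E := mem_cutList.mpr ⟨by omega, Or.inr (Or.inr hGc)⟩
    rcases hbetween c hcmem with h | h <;> omega

private lemma uniqPF {L1 : List ℕ} (hL1 : IsPrimeFactorization E L1) : L1 = cutList n E := by
  have hch1 := hL1.1
  have hch0 := cutList_chain (n := n) (E := E)
  have hmem : ∀ x, x ∈ L1 ↔ x ∈ cutList n E := by
    intro x
    constructor
    · intro hx
      have hxn : x ≤ n := allLe hch1 hL1.2.2.1 x hx
      rw [mem_cutList]
      refine ⟨by omega, ?_⟩
      by_cases h0 : x = 0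
      · exact Or.inl h0
      by_cases hn' : x = n
      · exact Or.inr (Or.inl hn')
      · exact Or.inr (Or.inr (elemIsGood hL1 hx h0 hn'))
    · intro hx
      rcases (mem_cutList.mp hx).2 with rfl | rfl | hG
      · exact mem_of_head'' hL1.2.1
      · exact mem_of_getLast'' hL1.2.2.1
      · exact cutMemL hL1 hG
  have hs1 : L1.Pairwise (· < ·) := List.isChain_iff_pairwise.mp hch1
  have hs0 : (cutList n E).Pairwise (· < ·) := List.isChain_iff_pairwise.mp hch0
  have nd1 : L1.Nodup := hs1.imp (fun h => ne_of_lt h)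
  have nd0 : (cutList n E).Nodup := hs0.imp (fun h => ne_of_lt h)
  haveI : Std.Antisymm (α := ℕ) (· < ·) := ⟨fun a b h1 h2 => absurd h2 (lt_asymm h1)⟩
  exact List.Perm.eq_of_pairwise' hs1 hs0
    (List.perm_of_nodup_nodup_toFinset_eq nd1 nd0
      (by ext x; simp only [List.mem_toFinset]; exact hmem x))

end Main2


/-- every near-edge admits a unique factorization into prime
near-edges. -/
theorem stmt_18 (n : ℕ) (hn : 1 ≤ n) (E : NearEdge n) :
    ∃! L : List ℕ, IsPrimeFactorization E L :=
  ⟨cutList n E, cutList_isPF, fun _ h => uniqPF h⟩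
end

section
/- Up to the natural equivalence (sign pattern of the heights), there are exactly 2^{n−1} convex n-near-edges: convex n-near-edges are classified by tuples (ε_1, …, ε_{n−1}) ∈ {±1}^{n−1} via the representative P_i = (i, ε_i · i(n−i)) for 0 < i < n, P_0 = (0,0), P_n = (n,0), and among these exactly one (the one with all ε_i = −1) factorizes completely as E_1^n into n trivial 1-near-edges, while all others are prime. -/
/-- A near-edge is convex if all of its points are extremal points of their convex hull. -/
def NearEdge.IsConvex {n : ℕ} (E : NearEdge n) : Prop :=
  ∀ i, E.pts i ∉ convexHull ℝ (E.pts '' {j | j ≠ i})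

/-- The standard representative of a convex n-near-edge with sign pattern ε:
P_i = (i, ε_i · i·(n−i)). -/
noncomputable def convexRep (n : ℕ) (ε : Fin (n + 1) → ℝ) : Fin (n + 1) → ℝ × ℝ :=
  fun i => ((i : ℝ), ε i * (i : ℝ) * ((n : ℝ) - (i : ℝ)))

lemma halfspace_not_mem (a b c : ℝ) (s : Set (ℝ × ℝ)) (p : ℝ × ℝ)
    (h : ∀ q ∈ s, a * q.1 + b * q.2 < c) (hp : c ≤ a * p.1 + b * p.2) :
    p ∉ convexHull ℝ s := by
  intro hmem
  have hlin : IsLinearMap ℝ (fun q : ℝ × ℝ => a * q.1 + b * q.2) := by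
    constructor
    · intro x y; simp only [Prod.fst_add, Prod.snd_add]; ring
    · intro r x; simp only [Prod.smul_fst, Prod.smul_snd, smul_eq_mul]; ring
  have hsub := convexHull_min (t := {w : ℝ × ℝ | a * w.1 + b * w.2 < c}) h
    (convex_halfSpace_lt hlin c) hmem
  simp only [Set.mem_setOf_eq] at hsub
  linarith

/-- convex n-near-edges are classified by the 2^{n-1} sign patterns
(ε_1,…,ε_{n−1}) ∈ {±1}^{n−1} via the representative P_i = (i, ε_i·i(n−i)); each such
representative is a convex near-edge; the one with all ε_i = −1 factorizes completely
into n trivial 1-near-edges, and all the others are prime. -/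
theorem stmt_19 (n : ℕ) (hn : 1 ≤ n) :
    {ε : Fin (n + 1) → ℝ | (∀ i : Fin (n + 1), 0 < i.val → i.val < n →
          (ε i = 1 ∨ ε i = -1)) ∧ ∀ i : Fin (n + 1), i.val = 0 ∨ i.val = n → ε i = 1}.ncard
        = 2 ^ (n - 1) ∧
      ∀ ε : Fin (n + 1) → ℝ,
        (∀ i : Fin (n + 1), 0 < i.val → i.val < n → (ε i = 1 ∨ ε i = -1)) →
        (∃ E : NearEdge n, E.pts = convexRep n ε) ∧
        ∀ E : NearEdge n, E.pts = convexRep n ε →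
          E.IsConvex ∧
          ((∀ i : Fin (n + 1), 0 < i.val → i.val < n → ε i = -1) →
            IsPrimeFactorization E (List.range (n + 1))) ∧
          ((∃ i : Fin (n + 1), 0 < i.val ∧ i.val < n ∧ ε i = 1) →
            PiecePrime E 0 n) := by
  classical
  constructor
  · -- counting part
    set T : Fin (n + 1) → Finset ℝ :=
      fun i => if 0 < i.val ∧ i.val < n then {1, -1} else {1} with hT
    have hset : {ε : Fin (n + 1) → ℝ | (∀ i : Fin (n + 1), 0 < i.val → i.val < n →
          (ε i = 1 ∨ ε i = -1)) ∧ ∀ i : Fin (n + 1), i.val = 0 ∨ i.val = n → ε i = 1}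
        = ↑(Fintype.piFinset T) := by
      ext ε
      simp only [Set.mem_setOf_eq, Finset.coe_sort_coe, Finset.mem_coe,
        Fintype.mem_piFinset]
      constructor
      · rintro ⟨h1, h2⟩ i
        by_cases h : 0 < i.val ∧ i.val < n
        · rcases h1 i h.1 h.2 with h' | h' <;> simp only [hT, if_pos h] <;> simp [h']
        · have hb : i.val = 0 ∨ i.val = n := by have := i.isLt; omega
          simp only [hT, if_neg h]; simp [h2 i hb]
      · intro h
        constructor
        · intro i h1 h2
          have := h i
          simp only [hT, if_pos (And.intro h1 h2)] at this; simpa using this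
        · intro i hb
          have := h i
          have hni : ¬ (0 < i.val ∧ i.val < n) := by omega
          simp only [hT, if_neg hni] at this; simpa using this
    rw [hset, Set.ncard_coe_finset, Fintype.card_piFinset]
    have hcard : ∀ i : Fin (n + 1),
        (T i).card = if 0 < i.val ∧ i.val < n then 2 else 1 := by
      intro i
      by_cases h : 0 < i.val ∧ i.val < n
      · have : ((1 : ℝ)) ≠ -1 := by norm_num
        simp only [hT, if_pos h]; rw [Finset.card_pair this]
      · simp only [hT, if_neg h]; simp
    rw [Finset.prod_congr rfl fun i _ => hcard i, Finset.prod_ite,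
      Finset.prod_const, Finset.prod_const, one_pow, mul_one]
    congr 1
    have hfil : (Finset.univ.filter fun i : Fin (n + 1) => 0 < i.val ∧ i.val < n)
        = Finset.Ioo 0 (Fin.last n) := by
      ext i
      simp only [Finset.mem_filter, Finset.mem_univ, true_and, Finset.mem_Ioo, Fin.lt_def,
        Fin.val_last, Fin.val_zero]
    rw [hfil, Fin.card_Ioo]
    simp [Fin.last]
  · intro ε hε
    have hjle : ∀ j : Fin (n + 1), j.val ≤ n := fun j => Nat.lt_succ_iff.mp j.isLt
    have hjleR : ∀ j : Fin (n + 1), ((j.val : ℝ)) ≤ (n : ℝ) :=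
      fun j => Nat.cast_le.mpr (hjle j)
    have h0le : ∀ j : Fin (n + 1), (0 : ℝ) ≤ (j : ℝ) * ((n : ℝ) - (j : ℝ)) := by
      intro j
      have h1 : (0 : ℝ) ≤ (j.val : ℝ) := Nat.cast_nonneg _
      have h2 := hjleR j
      nlinarith
    have hcases : ∀ j : Fin (n + 1),
        ε j * (j : ℝ) * ((n : ℝ) - (j : ℝ)) = (j : ℝ) * ((n : ℝ) - (j : ℝ)) ∨
        ε j * (j : ℝ) * ((n : ℝ) - (j : ℝ)) = -((j : ℝ) * ((n : ℝ) - (j : ℝ))) := by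
      intro j
      by_cases h1 : j.val = 0
      · left
        have hz : ((j.val : ℕ) : ℝ) = 0 := by rw [h1]; norm_num
        rw [hz]; ring
      · by_cases h2 : j.val = n
        · left
          have hz : ((j.val : ℕ) : ℝ) = (n : ℝ) := by rw [h2]
          rw [hz]; ring
        · rcases hε j (by omega) (by omega) with h | h
          · left; rw [h]; ring
          · right; rw [h]; ring
    have hub : ∀ j : Fin (n + 1),
        ε j * (j : ℝ) * ((n : ℝ) - (j : ℝ)) ≤ (j : ℝ) * ((n : ℝ) - (j : ℝ)) := by
      intro j
      rcases hcases j with h | h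
      · exact le_of_eq h
      · rw [h]; linarith [h0le j]
    have hlb : ∀ j : Fin (n + 1),
        -((j : ℝ) * ((n : ℝ) - (j : ℝ))) ≤ ε j * (j : ℝ) * ((n : ℝ) - (j : ℝ)) := by
      intro j
      rcases hcases j with h | h
      · rw [h]; linarith [h0le j]
      · exact le_of_eq h.symm
    constructor
    · -- existence of the near-edge
      refine ⟨⟨convexRep n ε, ?_, ?_, ?_⟩, rfl⟩
      · intro a b hab
        simp only [convexRep]
        exact_mod_cast Fin.lt_def.mp hab
      · simp [convexRep]
      · simp [convexRep, Fin.val_last]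
    · intro E hEpts
      refine ⟨?_, ?_, ?_⟩
      · -- convexity
        intro i
        rw [hEpts]
        by_cases hi0 : i.val = 0
        · apply halfspace_not_mem (-1) 0 0
          · rintro q ⟨j, hj, rfl⟩
            simp only [convexRep]
            have hj0 : 0 < j.val := by
              rcases Nat.eq_zero_or_pos j.val with h | h
              · exact absurd (Fin.ext (h.trans hi0.symm)) hj
              · exact h
            have : (0 : ℝ) < (j.val : ℝ) := by exact_mod_cast hj0
            linarith
          · simp only [convexRep]
            have hz : ((i.val : ℕ) : ℝ) = 0 := by rw [hi0]; norm_num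
            rw [hz]; norm_num
        · by_cases hin : i.val = n
          · apply halfspace_not_mem 1 0 (n : ℝ)
            · rintro q ⟨j, hj, rfl⟩
              simp only [convexRep]
              have hjn : j.val < n := by
                rcases (hjle j).lt_or_eq with h | h
                · exact h
                · exact absurd (Fin.ext (h.trans hin.symm)) hj
              have : ((j.val : ℕ) : ℝ) < (n : ℝ) := by exact_mod_cast hjn
              linarith
            · simp only [convexRep]
              have hz : ((i.val : ℕ) : ℝ) = (n : ℝ) := by rw [hin]
              rw [hz]; norm_num
          · have hi1 : 0 < i.val := Nat.pos_of_ne_zero hi0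
            have hi2 : i.val < n := lt_of_le_of_ne (hjle i) hin
            rcases hε i hi1 hi2 with hsi | hsi
            · apply halfspace_not_mem (-((n : ℝ) - 2 * (i : ℝ))) 1
                ((i : ℝ) * ((n : ℝ) - (i : ℝ)) - ((n : ℝ) - 2 * (i : ℝ)) * (i : ℝ))
              · rintro q ⟨j, hj, rfl⟩
                simp only [convexRep]
                have hne : ((j.val : ℕ) : ℝ) ≠ ((i.val : ℕ) : ℝ) := by
                  intro h
                  exact hj (Fin.ext (Nat.cast_injective h))
                have hsq : 0 < (((j.val : ℕ) : ℝ) - ((i.val : ℕ) : ℝ)) ^ 2 := by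
                  have h' : ((j.val : ℕ) : ℝ) - ((i.val : ℕ) : ℝ) ≠ 0 := sub_ne_zero.mpr hne
                  positivity
                nlinarith [hub j]
              · simp only [convexRep]
                exact le_of_eq (by rw [hsi]; ring)
            · apply halfspace_not_mem (-((n : ℝ) - 2 * (i : ℝ))) (-1)
                ((i : ℝ) * ((n : ℝ) - (i : ℝ)) - ((n : ℝ) - 2 * (i : ℝ)) * (i : ℝ))
              · rintro q ⟨j, hj, rfl⟩
                simp only [convexRep]
                have hne : ((j.val : ℕ) : ℝ) ≠ ((i.val : ℕ) : ℝ) := by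
                  intro h
                  exact hj (Fin.ext (Nat.cast_injective h))
                have hsq : 0 < (((j.val : ℕ) : ℝ) - ((i.val : ℕ) : ℝ)) ^ 2 := by
                  have h' : ((j.val : ℕ) : ℝ) - ((i.val : ℕ) : ℝ) ≠ 0 := sub_ne_zero.mpr hne
                  positivity
                nlinarith [hlb j]
              · simp only [convexRep]
                exact le_of_eq (by rw [hsi]; ring)
      · -- complete factorization when all signs are -1
        intro hall
        have hy : ∀ j : Fin (n + 1),
            ε j * (j : ℝ) * ((n : ℝ) - (j : ℝ)) = -((j : ℝ) * ((n : ℝ) - (j : ℝ))) := by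
          intro j
          by_cases h1 : j.val = 0
          · have hz : ((j.val : ℕ) : ℝ) = 0 := by rw [h1]; norm_num
            rw [hz]; ring
          · by_cases h2 : j.val = n
            · have hz : ((j.val : ℕ) : ℝ) = (n : ℝ) := by rw [h2]
              rw [hz]; ring
            · rw [hall j (by omega) (by omega)]; ring
        refine ⟨?_, ?_, ?_, ?_⟩
        · refine (List.isChain_range_succ _ _).mpr ?_
          exact fun m _ => Nat.lt_succ_self m
        · rw [List.range_succ_eq_map]; rfl
        · rw [List.range_succ, List.getLast?_concat]
        · rintro ⟨a, b⟩ hp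
          obtain ⟨k, hk, hpk⟩ := List.mem_iff_getElem.mp hp
          have hklen : k < n := by
            simpa [List.length_zip, List.length_tail, List.length_range] using hk
          rw [List.getElem_zip] at hpk
          have hk1 : k < (List.range (n + 1)).length := by
            simp [List.length_range]; omega
          have hk2 : k < (List.range (n + 1)).tail.length := by
            simp [List.length_tail, List.length_range]; omega
          have ha : a = k := by
            have := congrArg Prod.fst hpk
            simp [List.getElem_range] at this
            omega
          have hb : b = k + 1 := by
            have := congrArg Prod.snd hpk
            simp [List.getElem_tail, List.getElem_range] at this
            omega
          subst ha; subst hb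
          constructor
          · -- PieceFactor
            intro i j hik hij hjk q hq
            have hik' : a ≤ i.val := hik
            have hjk' : j.val ≤ a + 1 := hjk
            have hq' : q.val < a ∨ a + 1 < q.val := hq
            have hij' : i.val < j.val := Fin.lt_def.mp hij
            have hi : i.val = a := by omega
            have hj : j.val = a + 1 := by omega
            rw [hEpts]
            simp only [convexRep, StrictlyAbove]
            rw [hy i, hy j, hy q]
            have hIr : ((i.val : ℕ) : ℝ) = ((a : ℕ) : ℝ) := by rw [hi]
            have hJr : ((j.val : ℕ) : ℝ) = ((a : ℕ) : ℝ) + 1 := by rw [hj]; push_cast; ring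
            rw [hIr, hJr]
            rcases hq' with hq'' | hq''
            · have h1 : ((q.val : ℕ) : ℝ) < ((a : ℕ) : ℝ) := by exact_mod_cast hq''
              nlinarith [mul_pos (by linarith : (0:ℝ) < ((a : ℕ) : ℝ) - ((q.val : ℕ) : ℝ))
                (by linarith : (0:ℝ) < ((a : ℕ) : ℝ) + 1 - ((q.val : ℕ) : ℝ))]
            · have h1 : ((a : ℕ) : ℝ) + 1 < ((q.val : ℕ) : ℝ) := by exact_mod_cast hq''
              nlinarith [mul_pos (by linarith : (0:ℝ) < ((q.val : ℕ) : ℝ) - ((a : ℕ) : ℝ))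
                (by linarith : (0:ℝ) < ((q.val : ℕ) : ℝ) - ((a : ℕ) : ℝ) - 1)]
          · -- PiecePrime for the trivial piece
            refine ⟨Nat.lt_succ_self a, ?_⟩
            rintro ⟨c, hc1, hc2, -⟩
            omega
      · -- primality when some sign is +1
        rintro ⟨m, hm1, hm2, hm3⟩
        refine ⟨hn, ?_⟩
        rintro ⟨c, hc1, hc2, hcond1, hcond2⟩
        have hmR : (0 : ℝ) < (m.val : ℝ) := by exact_mod_cast hm1
        have hmR2 : ((m.val : ℕ) : ℝ) < (n : ℝ) := by exact_mod_cast hm2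
        have hnR : (0 : ℝ) < (n : ℝ) := by exact_mod_cast (by omega : 0 < n)
        have hym : (0 : ℝ) < ε m * (m : ℝ) * ((n : ℝ) - (m : ℝ)) := by
          rw [hm3]; nlinarith
        by_cases hmc : m.val ≤ c
        · have hthis := hcond1 0 m (by simp) (by rw [Fin.lt_def]; simpa using hm1) hmc
            (Fin.last n) (by simpa [Fin.val_last] using hc2) (by simp [Fin.val_last])
          rw [hEpts] at hthis
          simp only [convexRep, StrictlyAbove, Fin.val_zero, Fin.val_last,
            Nat.cast_zero, sub_self, mul_zero, zero_mul, sub_zero, zero_sub] at hthis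
          nlinarith
        · push_neg at hmc
          have hthis := hcond2 m (Fin.last n) (le_of_lt hmc)
            (by rw [Fin.lt_def]; simpa [Fin.val_last] using hm2)
            (by simp [Fin.val_last]) 0 (by simp) hc1
          rw [hEpts] at hthis
          simp only [convexRep, StrictlyAbove, Fin.val_zero, Fin.val_last,
            Nat.cast_zero, sub_self, mul_zero, zero_mul, sub_zero, zero_sub] at hthis
          nlinarith
end
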